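/- Let 0 < α ≤ η/2 and 0 < β ≤ α^{3/2}/9, and let G be a graph on n vertices. If G is (η, α)-robust and there is a partition {S₁′, S₂′} of V(G) with e(S₁′) < β²n² and e(S₂′) < β²n², then there is a partition {S₁, S₂} of V(G) such that e(Sᵢ) ≤ βn² for i ∈ {1,2}, every vertex of Sᵢ has at least (η/2)n neighbors in S_{3−i}, and the bipartite subgraph H = G[S₁, S₂] is (η/2, α/2)-robust. -/

import Mathlib

/-- Number of ordered pairs `(x, y)` with `x ∈ X`, `y ∈ Y` and `xy ∈ E(G)`. -/
noncomputable def eBetween {V : Type*} (G : SimpleGraph V) (X Y : Set V) : ℕ :=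
  {p : V × V | p.1 ∈ X ∧ p.2 ∈ Y ∧ G.Adj p.1 p.2}.ncard

/-- Number of edges of `G` with both endpoints in `S`. -/
noncomputable def eIn {V : Type*} (G : SimpleGraph V) (S : Set V) : ℕ :=
  {e ∈ G.edgeSet | ∀ v ∈ e, v ∈ S}.ncard

/-- Number of neighbors of `v` inside the set `S`. -/
noncomputable def nbrIn {V : Type*} (G : SimpleGraph V) (v : V) (S : Set V) : ℕ :=
  (G.neighborSet v ∩ S).ncard

/-- The bipartite subgraph `G[S, Sᶜ]` of `G` consisting of edges with one endpoint in `S`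
and the other outside `S`. -/
def bip {V : Type*} (G : SimpleGraph V) (S : Set V) : SimpleGraph V where
  Adj u v := G.Adj u v ∧ ((u ∈ S ∧ v ∉ S) ∨ (u ∉ S ∧ v ∈ S))
  symm := by
    constructor
    intro u v h
    exact ⟨h.1.symm, h.2.elim (fun h' => Or.inr ⟨h'.2, h'.1⟩) (fun h' => Or.inl ⟨h'.2, h'.1⟩)⟩
  loopless := by
    constructor
    intro v h
    rcases h.2 with ⟨h1, h2⟩ | ⟨h1, h2⟩
    · exact h2 h1
    · exact h1 h2

section Aux
variable {V : Type} [Fintype V]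

lemma eB_sum (G : SimpleGraph V) (X Y : Set V) :
    eBetween G X Y = ∑ v ∈ X.toFinite.toFinset, nbrIn G v Y := by
  classical
  rw [eBetween, Set.ncard_eq_toFinset_card _ (Set.toFinite _)]
  have h1 : (Set.toFinite {p : V × V | p.1 ∈ X ∧ p.2 ∈ Y ∧ G.Adj p.1 p.2}).toFinset
      = Finset.univ.filter (fun p : V × V => p.1 ∈ X ∧ p.2 ∈ Y ∧ G.Adj p.1 p.2) := by
    ext p; simp
  rw [h1, Finset.card_eq_sum_card_fiberwise (f := Prod.fst) (t := X.toFinite.toFinset)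
    (fun p hp => by simp at hp ⊢; exact hp.1)]
  refine Finset.sum_congr rfl fun v hv => ?_
  rw [nbrIn, Set.ncard_eq_toFinset_card _ (Set.toFinite _)]
  refine Finset.card_bij' (fun p _ => p.2) (fun u _ => (v, u)) ?_ ?_ ?_ ?_
  case refine_1 =>
    intro p hp
    simp only [Finset.mem_filter, Finset.mem_univ, true_and, Set.Finite.mem_toFinset,
      Set.mem_inter_iff, SimpleGraph.mem_neighborSet] at hp ⊢
    obtain ⟨⟨hx, hy, hadj⟩, hpv⟩ := hp
    exact ⟨hpv ▸ hadj, hy⟩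
  case refine_2 =>
    intro u hu
    simp only [Finset.mem_filter, Finset.mem_univ, true_and, Set.Finite.mem_toFinset,
      Set.mem_inter_iff, SimpleGraph.mem_neighborSet] at hu hv ⊢
    exact ⟨⟨hv, hu.2, hu.1⟩, trivial⟩
  case refine_3 =>
    intro p hp
    simp only [Finset.mem_filter] at hp
    exact Prod.ext hp.2.symm rfl
  case refine_4 =>
    intro u hu
    rfl

lemma eB_swap (G : SimpleGraph V) (X Y : Set V) : eBetween G X Y = eBetween G Y X := by
  have h : {p : V × V | p.1 ∈ Y ∧ p.2 ∈ X ∧ G.Adj p.1 p.2}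
      = Prod.swap '' {p : V × V | p.1 ∈ X ∧ p.2 ∈ Y ∧ G.Adj p.1 p.2} := by
    ext ⟨a, b⟩
    constructor
    · rintro ⟨ha, hb, hab⟩
      exact ⟨(b, a), ⟨hb, ha, hab.symm⟩, rfl⟩
    · rintro ⟨⟨c, d⟩, ⟨hc, hd, hcd⟩, h⟩
      cases h
      exact ⟨hd, hc, hcd.symm⟩
  rw [eBetween, eBetween, h, Set.ncard_image_of_injective _ Prod.swap_injective]

lemma nbrIn_union (G : SimpleGraph V) (v : V) {A B : Set V} (h : Disjoint A B) :
    nbrIn G v (A ∪ B) = nbrIn G v A + nbrIn G v B := by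
  rw [nbrIn, nbrIn, nbrIn, Set.inter_union_distrib_left]
  exact Set.ncard_union_eq
    (Set.disjoint_of_subset Set.inter_subset_right Set.inter_subset_right h)
    (Set.toFinite _) (Set.toFinite _)

lemma nbrIn_compl_add (G : SimpleGraph V) (v : V) (S : Set V) :
    nbrIn G v S + nbrIn G v Sᶜ = (G.neighborSet v).ncard := by
  rw [← nbrIn_union G v disjoint_compl_right, Set.union_compl_self, nbrIn, Set.inter_univ]

lemma nbrIn_singleton (G : SimpleGraph V) (v u : V) [Decidable (G.Adj v u)] :
    nbrIn G v {u} = if G.Adj v u then 1 else 0 := by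
  rw [nbrIn]
  split
  · rw [show G.neighborSet v ∩ {u} = {u} by
      ext w
      simp only [Set.mem_inter_iff, SimpleGraph.mem_neighborSet, Set.mem_singleton_iff]
      exact ⟨fun h => h.2, fun h => ⟨h ▸ ‹G.Adj v u›, h⟩⟩]
    simp
  · rw [show G.neighborSet v ∩ {u} = ∅ by
      ext w
      simp only [Set.mem_inter_iff, SimpleGraph.mem_neighborSet, Set.mem_singleton_iff,
        Set.mem_empty_iff_false, iff_false, not_and]
      intro h hw
      exact ‹¬ G.Adj v u› (hw ▸ h)]
    simp

lemma nbrIn_diff_self (G : SimpleGraph V) (v : V) (S : Set V) :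
    nbrIn G v (S \ {v}) = nbrIn G v S := by
  rw [nbrIn, nbrIn]
  congr 1
  ext u
  simp only [Set.mem_inter_iff, SimpleGraph.mem_neighborSet, Set.mem_diff,
    Set.mem_singleton_iff]
  constructor
  · rintro ⟨h, hu, _⟩; exact ⟨h, hu⟩
  · rintro ⟨h, hu⟩; exact ⟨h, hu, h.ne'⟩

lemma nbrIn_le (G : SimpleGraph V) (v : V) (S : Set V) : nbrIn G v S ≤ S.ncard :=
  Set.ncard_le_ncard Set.inter_subset_right (Set.toFinite _)

end Aux

section B
variable {V : Type} [Fintype V]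

lemma eB_union_left (G : SimpleGraph V) {A B : Set V} (Y : Set V) (h : Disjoint A B) :
    eBetween G (A ∪ B) Y = eBetween G A Y + eBetween G B Y := by
  classical
  rw [eB_sum, eB_sum, eB_sum,
    show (A ∪ B).toFinite.toFinset = A.toFinite.toFinset ∪ B.toFinite.toFinset from by
      ext u
      simp only [Set.Finite.mem_toFinset, Finset.mem_union, Set.mem_union]]
  exact Finset.sum_union (Set.Finite.disjoint_toFinset.mpr h)

lemma eB_union_right (G : SimpleGraph V) (X : Set V) {A B : Set V} (h : Disjoint A B) :
    eBetween G X (A ∪ B) = eBetween G X A + eBetween G X B := by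
  rw [eB_swap, eB_union_left G X h, eB_swap G A X, eB_swap G B X]

lemma eB_quad (G : SimpleGraph V) (S : Set V) :
    eBetween G Set.univ Set.univ
      = eBetween G S S + eBetween G Sᶜ Sᶜ + 2 * eBetween G S Sᶜ := by
  have h1 : (Set.univ : Set V) = S ∪ Sᶜ := (Set.union_compl_self S).symm
  rw [h1, eB_union_left G _ disjoint_compl_right, eB_union_right G S disjoint_compl_right,
    eB_union_right G Sᶜ disjoint_compl_right, eB_swap G Sᶜ S]
  ring

/-- restriction of `G` to `S` -/
def restr {V : Type*} (G : SimpleGraph V) (S : Set V) : SimpleGraph V where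
  Adj u v := G.Adj u v ∧ u ∈ S ∧ v ∈ S
  symm := ⟨fun u v h => ⟨h.1.symm, h.2.2, h.2.1⟩⟩
  loopless := ⟨fun v h => G.loopless.irrefl v h.1⟩

@[simp] lemma restr_adj {V : Type*} (G : SimpleGraph V) (S : Set V) (u v : V) :
    (restr G S).Adj u v ↔ G.Adj u v ∧ u ∈ S ∧ v ∈ S := Iff.rfl

@[simp] lemma bip_adj {V : Type*} (G : SimpleGraph V) (S : Set V) (u v : V) :
    (bip G S).Adj u v ↔ G.Adj u v ∧ ((u ∈ S ∧ v ∉ S) ∨ (u ∉ S ∧ v ∈ S)) := Iff.rfl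

lemma eIn_edgeSet {V : Type*} (G : SimpleGraph V) (S : Set V) :
    {e ∈ G.edgeSet | ∀ v ∈ e, v ∈ S} = (restr G S).edgeSet := by
  ext e
  refine Sym2.ind (fun a b => ?_) e
  simp only [Set.mem_setOf_eq, SimpleGraph.mem_edgeSet, restr_adj]
  constructor
  · rintro ⟨h, hm⟩
    exact ⟨h, hm a (by simp), hm b (by simp)⟩
  · rintro ⟨h, ha, hb⟩
    refine ⟨h, fun x hx => ?_⟩
    rcases Sym2.mem_iff.mp hx with rfl | rfl
    · exact ha
    · exact hb

lemma degree_restr_mem (G : SimpleGraph V) (S : Set V) [DecidableRel (restr G S).Adj]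
    {v : V} (hv : v ∈ S) : (restr G S).degree v = nbrIn G v S := by
  rw [nbrIn, Set.ncard_eq_toFinset_card _ (Set.toFinite _), SimpleGraph.degree,
    show (restr G S).neighborFinset v = (Set.toFinite (G.neighborSet v ∩ S)).toFinset from by
      ext u
      simp [SimpleGraph.mem_neighborFinset, SimpleGraph.mem_neighborSet, hv, and_comm]]

lemma degree_restr_not_mem (G : SimpleGraph V) (S : Set V) [DecidableRel (restr G S).Adj]
    {v : V} (hv : v ∉ S) : (restr G S).degree v = 0 := by
  rw [SimpleGraph.degree, Finset.card_eq_zero]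
  ext u
  simp [SimpleGraph.mem_neighborFinset, hv]

lemma eB_self (G : SimpleGraph V) (S : Set V) : eBetween G S S = 2 * eIn G S := by
  classical
  have hcard : eIn G S = (restr G S).edgeFinset.card := by
    rw [eIn, eIn_edgeSet, Set.ncard_eq_toFinset_card _ (Set.toFinite _)]
    congr 1
    ext e
    simp only [Set.Finite.mem_toFinset, SimpleGraph.mem_edgeFinset]
  rw [eB_sum, hcard, ← SimpleGraph.sum_degrees_eq_twice_card_edges]
  rw [Finset.sum_congr rfl (fun x hx =>
    (degree_restr_mem G S (by simpa using hx)).symm)]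
  exact Finset.sum_subset (Finset.subset_univ _)
    (fun x _ hx => degree_restr_not_mem G S (by simpa using hx))

lemma maxcut_deg (G : SimpleGraph V) (S : Set V)
    (hmax : ∀ T : Set V, eBetween G T Tᶜ ≤ eBetween G S Sᶜ) {v : V} (hv : v ∈ S) :
    nbrIn G v S ≤ nbrIn G v Sᶜ := by
  classical
  have hTc : (S \ {v})ᶜ = Sᶜ ∪ {v} := by
    ext u
    simp only [Set.mem_compl_iff, Set.mem_diff, Set.mem_singleton_iff, Set.mem_union,
      not_and, not_not]
    by_cases hu : u = v
    · subst hu; tauto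
    · tauto
  have hvT : v ∉ (S \ {v}).toFinite.toFinset := by
    simp only [Set.Finite.mem_toFinset, Set.mem_diff, Set.mem_singleton_iff]
    tauto
  have hSF : S.toFinite.toFinset = insert v (S \ {v}).toFinite.toFinset := by
    ext u
    simp only [Set.Finite.mem_toFinset, Finset.mem_insert, Set.mem_diff, Set.mem_singleton_iff]
    by_cases hu : u = v
    · subst hu; tauto
    · tauto
  have hcS : eBetween G S Sᶜ
      = nbrIn G v Sᶜ + ∑ x ∈ (S \ {v}).toFinite.toFinset, nbrIn G x Sᶜ := by
    rw [eB_sum, hSF, Finset.sum_insert hvT]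
  have hdisj : Disjoint Sᶜ ({v} : Set V) :=
    Set.disjoint_singleton_right.mpr (by simpa using hv)
  have hcT : eBetween G (S \ {v}) (S \ {v})ᶜ
      = (∑ x ∈ (S \ {v}).toFinite.toFinset, nbrIn G x Sᶜ) + nbrIn G v S := by
    rw [eB_sum,
      Finset.sum_congr rfl (fun x _ => by
        rw [hTc, nbrIn_union G x hdisj, nbrIn_singleton]),
      Finset.sum_add_distrib]
    congr 1
    rw [Finset.sum_boole, ← nbrIn_diff_self G v S, nbrIn,
      Set.ncard_eq_toFinset_card _ (Set.toFinite _)]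
    norm_cast
    congr 1
    ext u
    simp only [Finset.mem_filter, Set.Finite.mem_toFinset, Set.mem_inter_iff,
      SimpleGraph.mem_neighborSet]
    rw [G.adj_comm]
    tauto
  have := hmax (S \ {v})
  omega

lemma bip_nbr_of_mem (G : SimpleGraph V) (S : Set V) {v : V} (hv : v ∈ S) :
    (bip G S).neighborSet v = G.neighborSet v ∩ Sᶜ := by
  ext u
  simp only [SimpleGraph.mem_neighborSet, bip_adj, Set.mem_inter_iff, Set.mem_compl_iff]
  tauto

lemma bip_nbr_of_not_mem (G : SimpleGraph V) (S : Set V) {v : V} (hv : v ∉ S) :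
    (bip G S).neighborSet v = G.neighborSet v ∩ S := by
  ext u
  simp only [SimpleGraph.mem_neighborSet, bip_adj, Set.mem_inter_iff]
  tauto

lemma eB_loss (G : SimpleGraph V) (S X : Set V) :
    eBetween G X Xᶜ ≤ eBetween (bip G S) X Xᶜ + (eBetween G S S + eBetween G Sᶜ Sᶜ) := by
  have hsub : {p : V × V | p.1 ∈ X ∧ p.2 ∈ Xᶜ ∧ G.Adj p.1 p.2}
      ⊆ {p : V × V | p.1 ∈ X ∧ p.2 ∈ Xᶜ ∧ (bip G S).Adj p.1 p.2}
        ∪ ({p : V × V | p.1 ∈ S ∧ p.2 ∈ S ∧ G.Adj p.1 p.2}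
          ∪ {p : V × V | p.1 ∈ Sᶜ ∧ p.2 ∈ Sᶜ ∧ G.Adj p.1 p.2}) := by
    rintro ⟨a, b⟩ ⟨ha, hb, hab⟩
    by_cases haS : a ∈ S <;> by_cases hbS : b ∈ S
    · exact Or.inr (Or.inl ⟨haS, hbS, hab⟩)
    · exact Or.inl ⟨ha, hb, hab, Or.inl ⟨haS, hbS⟩⟩
    · exact Or.inl ⟨ha, hb, hab, Or.inr ⟨haS, hbS⟩⟩
    · exact Or.inr (Or.inr ⟨haS, hbS, hab⟩)
  calc eBetween G X Xᶜ
      ≤ ({p : V × V | p.1 ∈ X ∧ p.2 ∈ Xᶜ ∧ (bip G S).Adj p.1 p.2}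
        ∪ ({p : V × V | p.1 ∈ S ∧ p.2 ∈ S ∧ G.Adj p.1 p.2}
          ∪ {p : V × V | p.1 ∈ Sᶜ ∧ p.2 ∈ Sᶜ ∧ G.Adj p.1 p.2})).ncard :=
        Set.ncard_le_ncard hsub (Set.toFinite _)
    _ ≤ eBetween (bip G S) X Xᶜ + (eBetween G S S + eBetween G Sᶜ Sᶜ) := by
        refine le_trans (Set.ncard_union_le _ _) ?_
        exact add_le_add le_rfl (Set.ncard_union_le _ _)

lemma eB_ge_minDeg (H : SimpleGraph V) {c : ℝ}
    (hdeg : ∀ v : V, c ≤ ((H.neighborSet v).ncard : ℝ)) (X : Set V) :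
    (X.ncard : ℝ) * (c - (X.ncard : ℝ)) ≤ (eBetween H X Xᶜ : ℝ) := by
  have key : ∀ v : V, c - (X.ncard : ℝ) ≤ (nbrIn H v Xᶜ : ℝ) := by
    intro v
    have h1 := nbrIn_compl_add H v X
    have h2 := nbrIn_le H v X
    have h3 := hdeg v
    have h1' : ((nbrIn H v X : ℝ)) + (nbrIn H v Xᶜ : ℝ) = ((H.neighborSet v).ncard : ℝ) := by
      exact_mod_cast congrArg (Nat.cast : ℕ → ℝ) h1
    have h2' : (nbrIn H v X : ℝ) ≤ (X.ncard : ℝ) := by exact_mod_cast h2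
    linarith
  rw [eB_sum]
  push_cast
  calc (X.ncard : ℝ) * (c - (X.ncard : ℝ))
      = X.toFinite.toFinset.card • (c - (X.ncard : ℝ)) := by
        rw [Set.ncard_eq_toFinset_card _ X.toFinite, nsmul_eq_mul]
    _ ≤ ∑ v ∈ X.toFinite.toFinset, (nbrIn H v Xᶜ : ℝ) :=
        Finset.card_nsmul_le_sum _ _ _ (fun v _ => key v)

end B

set_option maxHeartbeats 1000000 in
/-- let `0 < α ≤ η/2` and `0 < β ≤ α^{3/2}/9`, and let `G` be `(η, α)`-robust
on `n` vertices.  If there is a partition `{S₁', S₂'}` of `V(G)` with `e(Sᵢ') < β²n²` for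
both parts, then there is a partition `{S₁, S₂}` with `e(Sᵢ) ≤ βn²`, each vertex of `Sᵢ`
has at least `(η/2)n` neighbors in the opposite part, and `H = G[S₁, S₂]` is
`(η/2, α/2)`-robust. -/
theorem observation_bipartiterobust {V : Type} [Fintype V] (G : SimpleGraph V) (n : ℕ)
    (hn : Fintype.card V = n) (η α β : ℝ) (hα : 0 < α) (hαη : α ≤ η / 2)
    (hβ : 0 < β) (hβα : β ≤ α ^ ((3 : ℝ) / 2) / 9)
    (hdeg : ∀ v : V, η * n ≤ ((G.neighborSet v).ncard : ℝ))
    (hcut : ∀ X : Set V, α * X.ncard * Xᶜ.ncard ≤ (eBetween G X Xᶜ : ℝ))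
    (S₁' : Set V) (h1' : (eIn G S₁' : ℝ) < β ^ 2 * n ^ 2)
    (h2' : (eIn G S₁'ᶜ : ℝ) < β ^ 2 * n ^ 2) :
    ∃ S₁ : Set V,
      (eIn G S₁ : ℝ) ≤ β * n ^ 2 ∧ (eIn G S₁ᶜ : ℝ) ≤ β * n ^ 2 ∧
      (∀ v ∈ S₁, η / 2 * n ≤ (nbrIn G v S₁ᶜ : ℝ)) ∧
      (∀ v ∈ S₁ᶜ, η / 2 * n ≤ (nbrIn G v S₁ : ℝ)) ∧
      (∀ v : V, η / 2 * n ≤ (((bip G S₁).neighborSet v).ncard : ℝ)) ∧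
      (∀ X : Set V, α / 2 * X.ncard * Xᶜ.ncard ≤ (eBetween (bip G S₁) X Xᶜ : ℝ)) := by
  classical
  -- `n` is positive
  have hn0 : (0 : ℝ) < n := by
    rcases Nat.eq_zero_or_pos n with h | h
    · exfalso
      rw [h] at h1'
      push_cast at h1'
      nlinarith [Nat.cast_nonneg (α := ℝ) (eIn G S₁')]
    · exact_mod_cast h
  have hne : Nonempty V := by
    rw [← Fintype.card_pos_iff, hn]
    exact_mod_cast hn0
  obtain ⟨v₀⟩ := hne
  -- η < 1
  have hη1 : η < 1 := by
    have h1 := hdeg v₀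
    have h2 : (G.neighborSet v₀).ncard < n := by
      have hsub : G.neighborSet v₀ ⊆ {v₀}ᶜ := by
        intro u hu
        simp only [Set.mem_compl_iff, Set.mem_singleton_iff]
        intro h
        exact G.loopless.irrefl v₀ (h ▸ hu)
      have hcompl : ({v₀} : Set V).ncard + ({v₀}ᶜ : Set V).ncard = n := by
        rw [Set.ncard_add_ncard_compl, Nat.card_eq_fintype_card, hn]
      have h1 : ({v₀} : Set V).ncard = 1 := Set.ncard_singleton v₀
      have h3 := Set.ncard_le_ncard hsub (Set.toFinite _)
      have hn1 : 1 ≤ n := by exact_mod_cast hn0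
      omega
    have h2' : ((G.neighborSet v₀).ncard : ℝ) < n := by exact_mod_cast h2
    nlinarith
  have hpow : α ^ ((3 : ℝ) / 2) ≤ 1 :=
    Real.rpow_le_one hα.le (by linarith) (by norm_num)
  have hβhalf : 2 * β ≤ 1 := by linarith
  have hβsq : β ^ 2 ≤ α ^ 3 / 81 := by
    have h2 : (α ^ ((3 : ℝ) / 2)) ^ 2 = α ^ 3 := by
      calc (α ^ ((3 : ℝ) / 2)) ^ 2 = α ^ (((3 : ℝ) / 2) * 2) := by
            rw [← Real.rpow_natCast (α ^ ((3 : ℝ) / 2)) 2, ← Real.rpow_mul hα.le]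
            norm_num
        _ = α ^ (3 : ℝ) := by norm_num
        _ = α ^ (3 : ℕ) := by
            rw [show (3 : ℝ) = ((3 : ℕ) : ℝ) by norm_num, Real.rpow_natCast]
    nlinarith [hβ.le, hβα]
  -- choose a max-cut partition
  obtain ⟨S, hS⟩ := Finite.exists_max (fun T : Set V => eBetween G T Tᶜ)
  have hSc : ∀ T : Set V, eBetween G T Tᶜ ≤ eBetween G Sᶜ Sᶜᶜ := by
    intro T
    rw [compl_compl, eB_swap G Sᶜ S]
    exact hS T
  -- degree conditions
  have hhalf1 : ∀ v ∈ S, η / 2 * n ≤ (nbrIn G v Sᶜ : ℝ) := by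
    intro v hv
    have h1 := maxcut_deg G S hS hv
    have h2 := nbrIn_compl_add G v S
    have h3 := hdeg v
    have h1' : (nbrIn G v S : ℝ) ≤ nbrIn G v Sᶜ := by exact_mod_cast h1
    have h2' : (nbrIn G v S : ℝ) + nbrIn G v Sᶜ = ((G.neighborSet v).ncard : ℝ) := by
      exact_mod_cast h2
    linarith
  have hhalf2 : ∀ v ∈ Sᶜ, η / 2 * n ≤ (nbrIn G v S : ℝ) := by
    intro v hv
    have h1 := maxcut_deg G Sᶜ hSc hv
    rw [compl_compl] at h1
    have h2 := nbrIn_compl_add G v S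
    have h3 := hdeg v
    have h1' : (nbrIn G v Sᶜ : ℝ) ≤ nbrIn G v S := by exact_mod_cast h1
    have h2' : (nbrIn G v S : ℝ) + nbrIn G v Sᶜ = ((G.neighborSet v).ncard : ℝ) := by
      exact_mod_cast h2
    linarith
  -- edge counts
  have hedge : eIn G S + eIn G Sᶜ ≤ eIn G S₁' + eIn G S₁'ᶜ := by
    have q1 := eB_quad G S
    have q2 := eB_quad G S₁'
    have q3 := hS S₁'
    have e1 := eB_self G S
    have e2 := eB_self G Sᶜ
    have e3 := eB_self G S₁'
    have e4 := eB_self G S₁'ᶜ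
    omega
  have hedgeR : (eIn G S : ℝ) + (eIn G Sᶜ : ℝ) < 2 * β ^ 2 * n ^ 2 := by
    have h := Nat.cast_le (α := ℝ) |>.mpr hedge
    push_cast at h
    linarith
  have hHdeg : ∀ v : V, η / 2 * n ≤ (((bip G S).neighborSet v).ncard : ℝ) := by
    intro v
    by_cases hv : v ∈ S
    · rw [bip_nbr_of_mem G S hv]
      exact hhalf1 v hv
    · rw [bip_nbr_of_not_mem G S hv]
      exact hhalf2 v hv
  have hprod : (0 : ℝ) ≤ β * n ^ 2 * (1 - 2 * β) :=
    mul_nonneg (mul_nonneg hβ.le (by positivity)) (by linarith)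
  refine ⟨S, ?_, ?_, hhalf1, hhalf2, hHdeg, ?_⟩
  · nlinarith [Nat.cast_nonneg (α := ℝ) (eIn G Sᶜ)]
  · nlinarith [Nat.cast_nonneg (α := ℝ) (eIn G S)]
  -- robustness of the bipartite graph
  intro X
  have hxy : (X.ncard : ℝ) + (Xᶜ.ncard : ℝ) = n := by
    have h := Set.ncard_add_ncard_compl X
    rw [Nat.card_eq_fintype_card, hn] at h
    exact_mod_cast h
  have hx0 : (0 : ℝ) ≤ X.ncard := Nat.cast_nonneg _
  have hy0 : (0 : ℝ) ≤ Xᶜ.ncard := Nat.cast_nonneg _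
  by_cases hxs : (X.ncard : ℝ) ≤ α / 2 * n
  · -- X is small
    have key := eB_ge_minDeg (bip G S) hHdeg X
    have hbr : (0 : ℝ) ≤ η / 2 * n - X.ncard - α / 2 * Xᶜ.ncard := by nlinarith
    nlinarith [key, mul_nonneg hx0 hbr]
  by_cases hys : (Xᶜ.ncard : ℝ) ≤ α / 2 * n
  · -- Xᶜ is small
    have key := eB_ge_minDeg (bip G S) hHdeg Xᶜ
    rw [compl_compl] at key
    rw [show eBetween (bip G S) X Xᶜ = eBetween (bip G S) Xᶜ X from eB_swap _ _ _]
    have hbr : (0 : ℝ) ≤ η / 2 * n - Xᶜ.ncard - α / 2 * X.ncard := by nlinarith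
    nlinarith [key, mul_nonneg hy0 hbr]
  -- both sides are large
  push_neg at hxs hys
  have hloss := eB_loss G S X
  have hl : (eBetween G X Xᶜ : ℝ)
      ≤ (eBetween (bip G S) X Xᶜ : ℝ) + ((eBetween G S S : ℝ) + (eBetween G Sᶜ Sᶜ : ℝ)) := by
    exact_mod_cast hloss
  have hself : (eBetween G S S : ℝ) + (eBetween G Sᶜ Sᶜ : ℝ)
      = 2 * (eIn G S : ℝ) + 2 * (eIn G Sᶜ : ℝ) := by
    have e1 := eB_self G S
    have e2 := eB_self G Sᶜ
    push_cast [e1, e2]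
    ring
  have hc := hcut X
  have hxyB : (α / 2 * n) * (α / 2 * n) ≤ (X.ncard : ℝ) * (Xᶜ.ncard : ℝ) :=
    mul_le_mul hxs.le hys.le (by positivity) hx0
  have hscale : α / 2 * ((α / 2 * n) * (α / 2 * n)) ≤ α / 2 * ((X.ncard : ℝ) * (Xᶜ.ncard : ℝ)) :=
    mul_le_mul_of_nonneg_left hxyB (by linarith)
  have hβn : β ^ 2 * (n : ℝ) ^ 2 ≤ α ^ 3 / 81 * (n : ℝ) ^ 2 :=
    mul_le_mul_of_nonneg_right hβsq (by positivity)
  nlinarith [hl, hself, hc, hedgeR, hscale, hβn]
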